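/- Let A, B, Zᵢ, Z_{i+1}, Z_j, Z_{j+1}, X, Y ∈ ℂ⁴ satisfy the unitarity-cut conditions ⟨A B Zᵢ Z_{i+1}⟩ = 0 and ⟨A B Z_j Z_{j+1}⟩ = 0, and assume ⟨Zᵢ Z_{i+1} Z_j Z_{j+1}⟩ ≠ 0. Then ⟨A B X Y⟩ · ⟨Zᵢ Z_{i+1} Z_j Z_{j+1}⟩ = ⟨Zᵢ Z_{j+1} X Y⟩⟨A B Z_{i+1} Z_j⟩ + ⟨Z_{i+1} Z_j X Y⟩⟨A B Zᵢ Z_{j+1}⟩ + ⟨Z_{j+1} Z_{i+1} X Y⟩⟨A B Zᵢ Z_j⟩ + ⟨Zᵢ Z_j X Y⟩⟨A B Z_{j+1} Z_{i+1}⟩. -/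
import Mathlib


/-- Four-bracket: determinant of the 4×4 matrix whose columns are `a b c d`. -/
noncomputable def brk4 (a b c d : Fin 4 → ℂ) : ℂ :=
  Matrix.det (Matrix.of fun i j => ![a, b, c, d] j i)

lemma brk4_expand (a b c d : Fin 4 → ℂ) :
    brk4 a b c d =
      a 0 * (b 1 * (c 2 * d 3 - c 3 * d 2) - b 2 * (c 1 * d 3 - c 3 * d 1)
        + b 3 * (c 1 * d 2 - c 2 * d 1))
      - a 1 * (b 0 * (c 2 * d 3 - c 3 * d 2) - b 2 * (c 0 * d 3 - c 3 * d 0)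
        + b 3 * (c 0 * d 2 - c 2 * d 0))
      + a 2 * (b 0 * (c 1 * d 3 - c 3 * d 1) - b 1 * (c 0 * d 3 - c 3 * d 0)
        + b 3 * (c 0 * d 1 - c 1 * d 0))
      - a 3 * (b 0 * (c 1 * d 2 - c 2 * d 1) - b 1 * (c 0 * d 2 - c 2 * d 0)
        + b 2 * (c 0 * d 1 - c 1 * d 0)) := by
  simp [brk4, Matrix.det_succ_row_zero, Fin.sum_univ_succ,
    show (Fin.succ 2 : Fin 4) = 3 from rfl,
    show (Fin.castSucc 2 : Fin 4) = 2 from rfl,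
    show Fin.succAbove (2 : Fin 4) 2 = 3 from rfl,
    show Fin.succAbove (1 : Fin 4) 2 = 3 from rfl,
    show Fin.succAbove (3 : Fin 4) 2 = 2 from rfl]
  ring

/-- Six-term Plücker expansion, valid for arbitrary vectors. -/
lemma plucker (A B Zi Zi1 Zj Zj1 X Y : Fin 4 → ℂ) :
    brk4 A B X Y * brk4 Zi Zi1 Zj Zj1 =
      brk4 Zi Zi1 X Y * brk4 A B Zj Zj1 - brk4 Zi Zj X Y * brk4 A B Zi1 Zj1
      + brk4 Zi Zj1 X Y * brk4 A B Zi1 Zj + brk4 Zi1 Zj X Y * brk4 A B Zi Zj1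
      - brk4 Zi1 Zj1 X Y * brk4 A B Zi Zj + brk4 Zj Zj1 X Y * brk4 A B Zi Zi1 := by
  simp only [brk4_expand]
  ring

/-- Expansion of a reference propagator `⟨A B X Y⟩` in terms of the four
cut-surviving brackets, under the unitarity-cut conditions. -/
theorem reference_propagator_expansion (A B Zi Zi1 Zj Zj1 X Y : Fin 4 → ℂ)
    (hcut1 : brk4 A B Zi Zi1 = 0) (hcut2 : brk4 A B Zj Zj1 = 0)
    (hne : brk4 Zi Zi1 Zj Zj1 ≠ 0) :
    brk4 A B X Y * brk4 Zi Zi1 Zj Zj1 =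
      brk4 Zi Zj1 X Y * brk4 A B Zi1 Zj + brk4 Zi1 Zj X Y * brk4 A B Zi Zj1 +
        brk4 Zj1 Zi1 X Y * brk4 A B Zi Zj + brk4 Zi Zj X Y * brk4 A B Zj1 Zi1 := by
  have h1 : brk4 Zj1 Zi1 X Y = - brk4 Zi1 Zj1 X Y := by
    simp only [brk4_expand]; ring
  have h2 : brk4 A B Zj1 Zi1 = - brk4 A B Zi1 Zj1 := by
    simp only [brk4_expand]; ring
  rw [plucker A B Zi Zi1 Zj Zj1 X Y, hcut1, hcut2, h1, h2]
  ring
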